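/- If a formula has finite Kreisel–Putnam rank, then so does the result of applying any substitution whose values all have finite Kreisel–Putnam rank (i.e., finiteness of rank is preserved under composition of substitutions with finite-rank values). -/

import Mathlib

inductive Fml : Type where
  | atom : ℕ → Fml
  | bot  : Fml
  | and  : Fml → Fml → Fml
  | or   : Fml → Fml → Fml
  | imp  : Fml → Fml → Fml
deriving DecidableEq

/-- Intuitionistic negation: ¬φ := φ → ⊥. -/
def Fml.neg (φ : Fml) : Fml := .imp φ .bot

/-- Biconditional. -/
def Fml.iff (φ ψ : Fml) : Fml := .and (.imp φ ψ) (.imp ψ φ)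

/-- Disjunction of a list of formulas (empty disjunction is ⊥). -/
def disj : List Fml → Fml
  | [] => .bot
  | [φ] => φ
  | φ :: l => .or φ (disj l)

/-- Conjunction of a list of formulas (empty conjunction is ¬⊥). -/
def conj : List Fml → Fml
  | [] => Fml.neg .bot
  | [φ] => φ
  | φ :: l => .and φ (conj l)

/-- Substitution, extended homomorphically. -/
def Fml.subst (σ : ℕ → Fml) : Fml → Fml
  | .atom p => σ p
  | .bot => .bot
  | .and φ ψ => .and (φ.subst σ) (ψ.subst σ)
  | .or φ ψ => .or (φ.subst σ) (ψ.subst σ)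
  | .imp φ ψ => .imp (φ.subst σ) (ψ.subst σ)

/-- Hilbert-style provability for intuitionistic logic plus extra axioms `Ax`. -/
inductive Prov (Ax : Fml → Prop) : Fml → Prop where
  | ax {φ} : Ax φ → Prov Ax φ
  | k {φ ψ} : Prov Ax (.imp φ (.imp ψ φ))
  | s {φ ψ χ} : Prov Ax (.imp (.imp φ (.imp ψ χ)) (.imp (.imp φ ψ) (.imp φ χ)))
  | andI {φ ψ} : Prov Ax (.imp φ (.imp ψ (.and φ ψ)))
  | andE₁ {φ ψ} : Prov Ax (.imp (.and φ ψ) φ)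
  | andE₂ {φ ψ} : Prov Ax (.imp (.and φ ψ) ψ)
  | orI₁ {φ ψ} : Prov Ax (.imp φ (.or φ ψ))
  | orI₂ {φ ψ} : Prov Ax (.imp ψ (.or φ ψ))
  | orE {φ ψ χ} : Prov Ax (.imp (.imp φ χ) (.imp (.imp ψ χ) (.imp (.or φ ψ) χ)))
  | exfalso {φ} : Prov Ax (.imp .bot φ)
  | mp {φ ψ} : Prov Ax (.imp φ ψ) → Prov Ax φ → Prov Ax ψ

/-- No extra axioms: pure intuitionistic logic is `Prov NoAx`. -/
def NoAx : Fml → Prop := fun _ => False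

/-- Instances of the weak Kreisel–Putnam axiom schema. -/
def wKPAx : Fml → Prop := fun φ =>
  ∃ a b c : Fml, φ = .imp (.imp a.neg (.or b.neg c.neg))
    (.or (.imp a.neg b.neg) (.imp a.neg c.neg))

/-- Intuitionistic Kripke forcing over a preordered set of worlds. -/
def Force {W : Type} [Preorder W] (V : W → ℕ → Prop) : W → Fml → Prop
  | w, .atom p => V w p
  | _, .bot => False
  | w, .and φ ψ => Force V w φ ∧ Force V w ψ
  | w, .or φ ψ => Force V w φ ∨ Force V w ψ
  | w, .imp φ ψ => ∀ v, w ≤ v → Force V v φ → Force V v ψ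

/-- A valuation is monotone (persistent). -/
def MonoVal {W : Type} [Preorder W] (V : W → ℕ → Prop) : Prop :=
  ∀ ⦃w w'⦄, w ≤ w' → ∀ p, V w p → V w' p

/-- The Medvedev frame `M n`: nonempty subsets of `Fin n` ordered by reverse inclusion. -/
def Med (n : ℕ) : Type := {I : Finset (Fin n) // I.Nonempty}

instance {n : ℕ} : PartialOrder (Med n) where
  le I J := J.1 ⊆ I.1
  le_refl I := Finset.Subset.refl _
  le_trans I J K h h' := Finset.Subset.trans h' h
  le_antisymm I J h h' := Subtype.ext (Finset.Subset.antisymm h' h)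

instance {n : ℕ} : DecidableEq (Med n) := Subtype.instDecidableEq

/-- Validity on the Medvedev frame `M n`. -/
def MedValid (n : ℕ) (φ : Fml) : Prop :=
  ∀ V : Med n → ℕ → Prop, MonoVal V → ∀ w, Force V w φ

/-- Medvedev's logic of finite problems. -/
def ML (φ : Fml) : Prop := ∀ n, MedValid n φ

/-- The singleton world `{i}` of `M n`. -/
def single {n : ℕ} (i : Fin n) : Med n := ⟨{i}, Finset.singleton_nonempty i⟩

/-- Exponentiation on ℕ∞ (anything involving ∞ gives ∞). -/
def epow : ℕ∞ → ℕ∞ → ℕ∞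
  | some a, some b => some (a ^ b)
  | _, _ => ⊤

/-- Kreisel–Putnam rank. -/
def rank : Fml → ℕ∞
  | .imp _ .bot => 1
  | .or φ ψ => rank φ + rank ψ
  | .and φ ψ => rank φ * rank ψ
  | .imp φ ψ => epow (rank ψ) (rank φ)
  | _ => ⊤

/-- Disjunction of `α i` over a finite index set. -/
noncomputable def bigOrOn {n : ℕ} (α : Fin n → Fml) (I : Finset (Fin n)) : Fml :=
  disj (I.toList.map α)

/-- `α_I := ¬¬⋁_{i ∈ I} α_i`. -/
noncomputable def alphaF {n : ℕ} (α : Fin n → Fml) (I : Finset (Fin n)) : Fml :=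
  Fml.neg (Fml.neg (bigOrOn α I))

lemma epow_coe_coe (a b : ℕ) : epow (a : ℕ∞) (b : ℕ∞) = ((a ^ b : ℕ) : ℕ∞) := rfl
lemma epow_top_left (b : ℕ∞) : epow ⊤ b = ⊤ := rfl
lemma epow_top_right (a : ℕ∞) : epow a ⊤ = ⊤ := by cases a <;> rfl

lemma epow_ne_zero (a b : ℕ∞) (ha : a ≠ 0) : epow a b ≠ 0 := by
  cases a <;> cases b <;> simp_all [epow_coe_coe, epow_top_left, epow_top_right]

lemma rank_ne_zero (φ : Fml) : rank φ ≠ 0 := by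
  induction φ with
  | atom p => simp [rank]
  | bot => simp [rank]
  | and a b ih1 ih2 => simp only [rank]; exact mul_ne_zero ih1 ih2
  | or a b ih1 ih2 =>
    simp only [rank]
    intro h
    exact ih1 (by simpa using (add_eq_zero.mp h).1)
  | imp a b ih1 ih2 =>
    cases b with
    | bot => simp [rank]
    | atom p => simp [rank, epow_coe_coe, epow_top_left, epow_top_right]
    | and x y => exact epow_ne_zero (rank (Fml.and x y)) (rank a) ih2
    | or x y => exact epow_ne_zero (rank (Fml.or x y)) (rank a) ih2
    | imp x y => exact epow_ne_zero (rank (Fml.imp x y)) (rank a) ih2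

/-- finiteness of Kreisel–Putnam rank is preserved by substitutions all of
whose values have finite rank. -/
theorem stmt13 (φ : Fml) (σ : ℕ → Fml) (hφ : rank φ ≠ ⊤)
    (hσ : ∀ p, rank (σ p) ≠ ⊤) : rank (φ.subst σ) ≠ ⊤ := by
  induction φ with
  | atom p => simp [rank] at hφ
  | bot => simp [rank] at hφ
  | and φ ψ ih1 ih2 =>
    simp only [rank, Fml.subst] at *
    exact WithTop.mul_ne_top (ih1 (fun h => hφ (by simp [h, ENat.top_mul (rank_ne_zero _), ENat.mul_top (rank_ne_zero _)])))
      (ih2 (fun h => hφ (by simp [h, ENat.top_mul (rank_ne_zero _), ENat.mul_top (rank_ne_zero _)])))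
  | or φ ψ ih1 ih2 =>
    simp only [rank, Fml.subst] at *
    exact WithTop.add_ne_top.mpr ⟨ih1 (WithTop.add_ne_top.mp hφ).1,
      ih2 (WithTop.add_ne_top.mp hφ).2⟩
  | imp φ ψ ih1 ih2 =>
    have key : ∀ a b : ℕ∞, epow a b ≠ ⊤ → a ≠ ⊤ ∧ b ≠ ⊤ := by
      intro a b h; cases a <;> cases b <;> simp_all [epow_coe_coe, epow_top_left, epow_top_right]
    have key2 : ∀ a b : ℕ∞, a ≠ ⊤ → b ≠ ⊤ → epow a b ≠ ⊤ := by
      intro a b ha hb; cases a <;> cases b <;> simp_all [epow_coe_coe, epow_top_left, epow_top_right]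
    cases ψ with
    | bot => simp [Fml.subst, rank]
    | atom p => simp [rank, epow_coe_coe, epow_top_left, epow_top_right] at hφ
    | and a b =>
      simp only [rank, Fml.subst] at *
      obtain ⟨h1, h2⟩ := key _ _ hφ
      exact key2 _ _ (ih2 h1) (ih1 h2)
    | or a b =>
      simp only [rank, Fml.subst] at *
      obtain ⟨h1, h2⟩ := key _ _ hφ
      exact key2 _ _ (ih2 h1) (ih1 h2)
    | imp a b =>
      simp only [rank, Fml.subst] at *
      obtain ⟨h1, h2⟩ := key _ _ hφ
      exact key2 _ _ (ih2 h1) (ih1 h2)
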